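/- Suppose the four functions f, g, h, v : ℤ × ℝ → ℂ are differentiable in the time variable t, f(n,t) ≠ 0 for all (n,t), and for all n ∈ ℤ and t ∈ ℝ they satisfy the bilinear system: (i) i(∂ₜg(n,t)·f(n,t) − g(n,t)·∂ₜf(n,t)) = ½[(2n+2)g(n+1,t)f(n−1,t) + (2n−2)g(n−1,t)f(n+1,t) − 4n·g(n,t)f(n,t)] + g(n,t)v(n,t); (ii) i(∂ₜh(n,t)·f(n,t) − h(n,t)·∂ₜf(n,t)) = −½[(2n+2)h(n+1,t)f(n−1,t) + (2n−2)h(n−1,t)f(n+1,t) − 4n·h(n,t)f(n,t)] − h(n,t)v(n,t); (iii) f(n,t)² − f(n−1,t)f(n+1,t) = g(n,t)h(n,t); (iv) v(n+1,t)f(n,t) − v(n,t)f(n+1,t) = −g(n+1,t)h(n,t) − g(n,t)h(n+1,t). Then the functions Q := g/f, R := h/f, u := −v/f satisfy, for all n ∈ ℤ and t ∈ ℝ: i∂ₜQ(n,t) = ½(1 − Q(n,t)R(n,t))[(2n+2)Q(n+1,t) + (2n−2)Q(n−1,t)] − 2n·Q(n,t) − Q(n,t)u(n,t); i∂ₜR(n,t)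 = −½(1 − Q(n,t)R(n,t))[(2n+2)R(n+1,t) + (2n−2)R(n−1,t)] + 2n·R(n,t) + R(n,t)u(n,t); and u(n+1,t) − u(n,t) = Q(n+1,t)R(n,t) + Q(n,t)R(n+1,t). -/

import Mathlib

open Complex

/-- The substitution `Q = g/f`, `R = h/f`, `u = -v/f` transforms the Hirota bilinear form of
the coupled nonisospectral semi-discrete NLS back into the nonlinear system. -/
theorem bilinearization_of_coupled_sdnNLS
    (f g h v : ℤ × ℝ → ℂ)
    (hfd : ∀ n : ℤ, Differentiable ℝ fun t => f (n, t))
    (hgd : ∀ n : ℤ, Differentiable ℝ fun t => g (n, t))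
    (hhd : ∀ n : ℤ, Differentiable ℝ fun t => h (n, t))
    (hvd : ∀ n : ℤ, Differentiable ℝ fun t => v (n, t))
    (hfne : ∀ (n : ℤ) (t : ℝ), f (n, t) ≠ 0)
    (heq1 : ∀ (n : ℤ) (t : ℝ),
      Complex.I * (deriv (fun s => g (n, s)) t * f (n, t)
          - g (n, t) * deriv (fun s => f (n, s)) t)
        = (1 / 2) * ((2 * (n : ℂ) + 2) * g (n + 1, t) * f (n - 1, t)
            + (2 * (n : ℂ) - 2) * g (n - 1, t) * f (n + 1, t)
            - 4 * (n : ℂ) * g (n, t) * f (n, t)) + g (n, t) * v (n, t))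
    (heq2 : ∀ (n : ℤ) (t : ℝ),
      Complex.I * (deriv (fun s => h (n, s)) t * f (n, t)
          - h (n, t) * deriv (fun s => f (n, s)) t)
        = -(1 / 2) * ((2 * (n : ℂ) + 2) * h (n + 1, t) * f (n - 1, t)
            + (2 * (n : ℂ) - 2) * h (n - 1, t) * f (n + 1, t)
            - 4 * (n : ℂ) * h (n, t) * f (n, t)) - h (n, t) * v (n, t))
    (heq3 : ∀ (n : ℤ) (t : ℝ),
      f (n, t) ^ 2 - f (n - 1, t) * f (n + 1, t) = g (n, t) * h (n, t))
    (heq4 : ∀ (n : ℤ) (t : ℝ),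
      v (n + 1, t) * f (n, t) - v (n, t) * f (n + 1, t)
        = -g (n + 1, t) * h (n, t) - g (n, t) * h (n + 1, t))
    (Q R u : ℤ × ℝ → ℂ)
    (hQ : ∀ (n : ℤ) (t : ℝ), Q (n, t) = g (n, t) / f (n, t))
    (hR : ∀ (n : ℤ) (t : ℝ), R (n, t) = h (n, t) / f (n, t))
    (hu : ∀ (n : ℤ) (t : ℝ), u (n, t) = -v (n, t) / f (n, t)) :
    (∀ (n : ℤ) (t : ℝ),
      Complex.I * deriv (fun s => Q (n, s)) t
        = (1 / 2) * (1 - Q (n, t) * R (n, t))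
            * ((2 * (n : ℂ) + 2) * Q (n + 1, t) + (2 * (n : ℂ) - 2) * Q (n - 1, t))
          - 2 * (n : ℂ) * Q (n, t) - Q (n, t) * u (n, t))
    ∧ (∀ (n : ℤ) (t : ℝ),
      Complex.I * deriv (fun s => R (n, s)) t
        = -(1 / 2) * (1 - Q (n, t) * R (n, t))
            * ((2 * (n : ℂ) + 2) * R (n + 1, t) + (2 * (n : ℂ) - 2) * R (n - 1, t))
          + 2 * (n : ℂ) * R (n, t) + R (n, t) * u (n, t))
    ∧ (∀ (n : ℤ) (t : ℝ),
      u (n + 1, t) - u (n, t) = Q (n + 1, t) * R (n, t) + Q (n, t) * R (n + 1, t)) := by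
  refine ⟨fun n t => ?_, fun n t => ?_, fun n t => ?_⟩
  · have hdQ : deriv (fun s => Q (n, s)) t
        = (deriv (fun s => g (n, s)) t * f (n, t)
            - g (n, t) * deriv (fun s => f (n, s)) t) / f (n, t) ^ 2 := by
      have : (fun s => Q (n, s)) = fun s => g (n, s) / f (n, s) := funext fun s => hQ n s
      rw [this, deriv_fun_div ((hgd n).differentiableAt) ((hfd n).differentiableAt) (hfne n t)]
    rw [hdQ, hQ, hQ, hQ, hR, hu]
    field_simp [hfne n t, hfne (n+1) t, hfne (n-1) t]
    have hD : (2 : ℂ) * (f (n, t) * f (n, t)) * (f (n + 1, t) * f (n - 1, t)) * f (n, t) ≠ 0 := by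
      simp [hfne n t, hfne (n+1) t, hfne (n-1) t]
    linear_combination (f (n+1,t) * f (n-1,t)) * heq1 n t
      - (((n:ℂ) + 1) * g (n+1,t) * f (n-1,t)
          + f (n+1,t) * ((n:ℂ) - 1) * g (n-1,t)) * heq3 n t
  · have hdR : deriv (fun s => R (n, s)) t
        = (deriv (fun s => h (n, s)) t * f (n, t)
            - h (n, t) * deriv (fun s => f (n, s)) t) / f (n, t) ^ 2 := by
      have : (fun s => R (n, s)) = fun s => h (n, s) / f (n, s) := funext fun s => hR n s
      rw [this, deriv_fun_div ((hhd n).differentiableAt) ((hfd n).differentiableAt) (hfne n t)]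
    rw [hdR, hQ, hR, hR, hR, hu]
    field_simp [hfne n t, hfne (n+1) t, hfne (n-1) t]
    have hD : (2 : ℂ) * (f (n, t) * f (n, t)) * (f (n + 1, t) * f (n - 1, t)) * f (n, t) ≠ 0 := by
      simp [hfne n t, hfne (n+1) t, hfne (n-1) t]
    linear_combination (f (n+1,t) * f (n-1,t)) * heq2 n t
      + (((n:ℂ) + 1) * h (n+1,t) * f (n-1,t)
          + f (n+1,t) * ((n:ℂ) - 1) * h (n-1,t)) * heq3 n t
  · rw [hu, hu, hQ, hQ, hR, hR]
    field_simp [hfne n t, hfne (n+1) t]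
    linear_combination (-1 : ℂ) * heq4 n t
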